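/- The mutual entropy is bounded by the relative entropy to any product reference state: if ϖ is a positive definite density matrix on ℂ^m ⊗ ℂ^n, σ_L a positive definite density matrix on ℂ^m, and σ_R a positive definite density matrix on ℂ^n, then I_ϖ(A:B) ≤ S(ϖ | σ_L ⊗ σ_R). -/

import Mathlib

open scoped Kronecker ComplexOrder
open Matrix

noncomputable section

namespace TAL

/-- A density matrix: positive semidefinite with trace `1`. -/
def IsDensityMatrix {k : Type*} [Fintype k] [DecidableEq k] (D : Matrix k k ℂ) : Prop :=
  D.PosSemidef ∧ D.trace = 1

/-- Functional calculus for Hermitian matrices via the spectral decomposition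
(junk value `0` on non-Hermitian matrices). -/
def hermCalc {k : Type*} [Fintype k] [DecidableEq k] (f : ℝ → ℝ) (A : Matrix k k ℂ) :
    Matrix k k ℂ :=
  if hA : A.IsHermitian then
    (hA.eigenvectorUnitary : Matrix k k ℂ) *
      Matrix.diagonal (fun i => (f (hA.eigenvalues i) : ℂ)) *
        star (hA.eigenvectorUnitary : Matrix k k ℂ)
  else 0

/-- Matrix logarithm via the spectral decomposition. -/
def matLog {k : Type*} [Fintype k] [DecidableEq k] (A : Matrix k k ℂ) : Matrix k k ℂ :=
  hermCalc Real.log A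

/-- The von Neumann entropy `S(D) = -Tr (D log D)`, computed through the eigenvalues,
with the convention `0 * log 0 = 0` (junk value `0` on non-Hermitian matrices). -/
def vnEntropy {k : Type*} [Fintype k] [DecidableEq k] (A : Matrix k k ℂ) : ℝ :=
  if hA : A.IsHermitian then ∑ i, Real.negMulLog (hA.eigenvalues i) else 0

/-- The Umegaki relative entropy `S(D | E) = Tr (D (log D - log E))`. -/
def relEntropy {k : Type*} [Fintype k] [DecidableEq k] (D E : Matrix k k ℂ) : ℝ :=
  ((D * (matLog D - matLog E)).trace).re

/-- Partial trace over the second (right) tensor factor. -/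
def ptraceR {k₁ k₂ : Type*} [Fintype k₂] (D : Matrix (k₁ × k₂) (k₁ × k₂) ℂ) :
    Matrix k₁ k₁ ℂ :=
  Matrix.of fun i j => ∑ s : k₂, D (i, s) (j, s)

/-- Partial trace over the first (left) tensor factor. -/
def ptraceL {k₁ k₂ : Type*} [Fintype k₁] (D : Matrix (k₁ × k₂) (k₁ × k₂) ℂ) :
    Matrix k₂ k₂ ℂ :=
  Matrix.of fun i j => ∑ s : k₁, D (s, i) (s, j)

/-- The mutual entropy `I_D(A:B) = S(D_A) + S(D_B) - S(D)`. -/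
def mutualEntropy {k₁ k₂ : Type*} [Fintype k₁] [Fintype k₂] [DecidableEq k₁] [DecidableEq k₂]
    (D : Matrix (k₁ × k₂) (k₁ × k₂) ℂ) : ℝ :=
  vnEntropy (ptraceR D) + vnEntropy (ptraceL D) - vnEntropy D

/-- The Gibbs density matrix `e^{-β H} / Tr(e^{-β H})`. -/
def gibbs {k : Type*} [Fintype k] [DecidableEq k] (β : ℝ) (H : Matrix k k ℂ) :
    Matrix k k ℂ :=
  (NormedSpace.exp ((-(β : ℂ)) • H)).trace⁻¹ • NormedSpace.exp ((-(β : ℂ)) • H)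

/-- The free energy functional `F(D) = Tr(H D) - β⁻¹ S(D)` (real part of the trace). -/
def freeEnergy {k : Type*} [Fintype k] [DecidableEq k] (β : ℝ) (H D : Matrix k k ℂ) : ℝ :=
  ((H * D).trace).re - β⁻¹ * vnEntropy D

/-- The ℓ²-operator norm of a matrix. -/
def opNorm {k : Type*} [Fintype k] [DecidableEq k] (A : Matrix k k ℂ) : ℝ :=
  ‖(Matrix.toEuclideanCLM (𝕜 := ℂ) A : EuclideanSpace ℂ k →L[ℂ] EuclideanSpace ℂ k)‖

/-- The trace norm `‖X‖₁ = Tr ((X* X)^{1/2})`. -/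
def traceNorm {k : Type*} [Fintype k] [DecidableEq k] (X : Matrix k k ℂ) : ℝ :=
  (((Matrix.posSemidef_conjTranspose_mul_self X).1.eigenvectorUnitary : Matrix k k ℂ) *
    Matrix.diagonal (((↑) : ℝ → ℂ) ∘ (√·) ∘ (Matrix.posSemidef_conjTranspose_mul_self X).1.eigenvalues) *
      (star (Matrix.posSemidef_conjTranspose_mul_self X).1.eigenvectorUnitary :
        Matrix k k ℂ)).trace.re


/-- The perturbed density matrix `D^h = e^{log D + h} / Tr(e^{log D + h})`. -/
def pert {k : Type*} [Fintype k] [DecidableEq k] (D h : Matrix k k ℂ) : Matrix k k ℂ :=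
  (NormedSpace.exp (matLog D + h)).trace⁻¹ • NormedSpace.exp (matLog D + h)


section Aux

open Polynomial

variable {k k₁ k₂ : Type*} [Fintype k] [DecidableEq k] [Fintype k₁] [DecidableEq k₁]
  [Fintype k₂] [DecidableEq k₂]

set_option linter.unusedSectionVars false

def unitaryConjAlgHom (U : Matrix.unitaryGroup k ℂ) : Matrix k k ℂ →ₐ[ℂ] Matrix k k ℂ where
  toFun X := (U : Matrix k k ℂ) * X * star (U : Matrix k k ℂ)
  map_one' := by
    show (U : Matrix k k ℂ) * 1 * star (U : Matrix k k ℂ) = 1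
    rw [mul_one]; exact U.2.2
  map_mul' A B := by
    have h : star (U : Matrix k k ℂ) * (U : Matrix k k ℂ) = 1 := U.2.1
    show _ = ((U:Matrix k k ℂ) * A * star (U:Matrix k k ℂ)) * ((U:Matrix k k ℂ) * B * star (U:Matrix k k ℂ))
    simp only [Matrix.mul_assoc]
    rw [← Matrix.mul_assoc (star (U:Matrix k k ℂ)) (U:Matrix k k ℂ), h, Matrix.one_mul]
  map_zero' := by simp
  map_add' A B := by simp [Matrix.add_mul, Matrix.mul_add]
  commutes' r := by
    have h : (U : Matrix k k ℂ) * star (U : Matrix k k ℂ) = 1 := U.2.2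
    simp only [Algebra.algebraMap_eq_smul_one, mul_smul_comm, smul_mul_assoc, mul_one, h]

lemma aeval_unitary_conj (U : Matrix.unitaryGroup k ℂ) (A : Matrix k k ℂ) (p : ℂ[X]) :
    aeval ((U : Matrix k k ℂ) * A * star (U : Matrix k k ℂ)) p
      = (U : Matrix k k ℂ) * aeval A p * star (U : Matrix k k ℂ) :=
  Polynomial.aeval_algHom_apply (unitaryConjAlgHom U) A p

lemma aeval_diagonal' (d : k → ℂ) (p : ℂ[X]) :
    aeval (Matrix.diagonal d) p = Matrix.diagonal (fun i => p.eval (d i)) := by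
  have h := Polynomial.aeval_algHom_apply
    (Matrix.diagonalAlgHom ℂ : (k → ℂ) →ₐ[ℂ] Matrix k k ℂ) d p
  rw [Matrix.diagonalAlgHom_apply] at h
  rw [h, Matrix.diagonalAlgHom_apply]
  have h3 : ((aeval d) p : k → ℂ) = fun i => p.eval (d i) := by
    funext i
    have h2 := Polynomial.aeval_algHom_apply (Pi.evalAlgHom ℂ (fun _ : k => ℂ) i) d p
    simp only [Pi.evalAlgHom_apply] at h2
    rw [← h2]
    simp [Polynomial.aeval_def, Polynomial.eval₂_eq_eval_map, Algebra.algebraMap_self,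
      Polynomial.map_id]
  rw [h3]

lemma conj_mul_conj (U : Matrix.unitaryGroup k ℂ) (X Y : Matrix k k ℂ) :
    ((U:Matrix k k ℂ) * X * star (U:Matrix k k ℂ)) * ((U:Matrix k k ℂ) * Y * star (U:Matrix k k ℂ))
      = (U:Matrix k k ℂ) * (X * Y) * star (U:Matrix k k ℂ) :=
  (map_mul (unitaryConjAlgHom U) X Y).symm

lemma trace_conj (U : Matrix.unitaryGroup k ℂ) (X : Matrix k k ℂ) :
    ((U:Matrix k k ℂ) * X * star (U:Matrix k k ℂ)).trace = X.trace := by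
  rw [Matrix.trace_mul_comm, ← Matrix.mul_assoc, U.2.1, Matrix.one_mul]


lemma isHermitian_conj_diag (U : Matrix.unitaryGroup k ℂ) (d : k → ℝ) :
    ((U:Matrix k k ℂ) * Matrix.diagonal (fun i => (d i : ℂ)) * star (U:Matrix k k ℂ)).IsHermitian := by
  unfold Matrix.IsHermitian
  simp only [Matrix.star_eq_conjTranspose, Matrix.conjTranspose_mul,
    Matrix.conjTranspose_conjTranspose, Matrix.diagonal_conjTranspose]
  have : star (fun i => (d i : ℂ)) = fun i => (d i : ℂ) := by
    funext i; simp [Complex.conj_ofReal]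
  rw [this, Matrix.mul_assoc]

lemma spectral_theorem'' {A : Matrix k k ℂ} (hA : A.IsHermitian) :
    A = (hA.eigenvectorUnitary : Matrix k k ℂ) *
      Matrix.diagonal (fun i => (hA.eigenvalues i : ℂ)) *
        star (hA.eigenvectorUnitary : Matrix k k ℂ) := by
  simpa [Function.comp_def] using hA.spectral_theorem

lemma hermCalc_conj_diag (f : ℝ → ℝ) (U : Matrix.unitaryGroup k ℂ) (d : k → ℝ) :
    hermCalc f ((U:Matrix k k ℂ) * Matrix.diagonal (fun i => (d i:ℂ)) * star (U:Matrix k k ℂ))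
      = (U:Matrix k k ℂ) * Matrix.diagonal (fun i => (f (d i):ℂ)) * star (U:Matrix k k ℂ) := by
  set A := (U:Matrix k k ℂ) * Matrix.diagonal (fun i => (d i:ℂ)) * star (U:Matrix k k ℂ) with hAdef
  have hA : A.IsHermitian := isHermitian_conj_diag U d
  classical
  set s : Finset ℝ := Finset.univ.image d ∪ Finset.univ.image hA.eigenvalues with hs
  set p : ℝ[X] := Lagrange.interpolate s id f with hp
  have hev : ∀ x ∈ s, p.eval x = f x := by
    intro x hx
    have := Lagrange.eval_interpolate_at_node f (Set.injOn_id _) hx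
    exact this
  set q : ℂ[X] := p.map (algebraMap ℝ ℂ) with hq
  have hevq : ∀ x ∈ s, q.eval ((x:ℝ):ℂ) = ((f x : ℝ) : ℂ) := by
    intro x hx
    rw [hq, Polynomial.eval_map]
    have hc : ((x:ℝ):ℂ) = algebraMap ℝ ℂ x := rfl
    rw [hc, Polynomial.eval₂_at_apply, hev x hx]
    rfl
  have key : ∀ (V : Matrix.unitaryGroup k ℂ) (e : k → ℝ), (∀ i, e i ∈ s) →
      aeval ((V:Matrix k k ℂ) * Matrix.diagonal (fun i => (e i:ℂ)) * star (V:Matrix k k ℂ)) q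
        = (V:Matrix k k ℂ) * Matrix.diagonal (fun i => (f (e i):ℂ)) * star (V:Matrix k k ℂ) := by
    intro V e he
    rw [aeval_unitary_conj, aeval_diagonal']
    have : (fun i => q.eval ((e i : ℝ):ℂ)) = fun i => ((f (e i) : ℝ) : ℂ) := by
      funext i; exact hevq (e i) (he i)
    rw [this]
  have hmem1 : ∀ i, d i ∈ s := fun i =>
    Finset.mem_union_left _ (Finset.mem_image_of_mem d (Finset.mem_univ i))
  have hmem2 : ∀ i, hA.eigenvalues i ∈ s := fun i =>
    Finset.mem_union_right _ (Finset.mem_image_of_mem _ (Finset.mem_univ i))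
  have e2 := key hA.eigenvectorUnitary hA.eigenvalues hmem2
  rw [← spectral_theorem'' hA] at e2
  have e1 := key U d hmem1
  rw [← hAdef] at e1
  rw [hermCalc, dif_pos hA, ← e2, e1]


lemma matLog_of_isHermitian {A : Matrix k k ℂ} (hA : A.IsHermitian) :
    matLog A = (hA.eigenvectorUnitary : Matrix k k ℂ) *
      Matrix.diagonal (fun i => (Real.log (hA.eigenvalues i) : ℂ)) *
        star (hA.eigenvectorUnitary : Matrix k k ℂ) := by
  rw [matLog, hermCalc, dif_pos hA]

lemma trace_mul_matLog_self {D : Matrix k k ℂ} (hD : D.IsHermitian) :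
    (D * matLog D).trace
      = ∑ i, ((hD.eigenvalues i : ℂ) * (Real.log (hD.eigenvalues i) : ℂ)) := by
  have h0 := congrArg (fun M => (M * matLog D).trace) (spectral_theorem'' hD)
  rw [h0, matLog_of_isHermitian hD, conj_mul_conj, Matrix.diagonal_mul_diagonal, trace_conj,
    Matrix.trace_diagonal]

lemma sum_eigenvalues_eq_trace {D : Matrix k k ℂ} (hD : D.IsHermitian) :
    ∑ i, ((hD.eigenvalues i : ℂ)) = D.trace := by
  conv_rhs => rw [spectral_theorem'' hD]
  rw [trace_conj, Matrix.trace_diagonal]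

lemma vnEntropy_eq {D : Matrix k k ℂ} (hD : D.IsHermitian) :
    vnEntropy D = -((D * matLog D).trace).re := by
  rw [vnEntropy, dif_pos hD, trace_mul_matLog_self hD, Complex.re_sum]
  rw [← Finset.sum_neg_distrib]
  congr 1; funext i
  simp [Real.negMulLog, ← Complex.ofReal_mul]

lemma log_ineq {a b : ℝ} (ha : 0 ≤ a) (hb : 0 < b) :
    a * Real.log b ≤ a * Real.log a + b - a := by
  rcases eq_or_lt_of_le ha with h | h
  · simp [← h]; positivity
  · have h2 := Real.log_le_sub_one_of_pos (show 0 < b / a by positivity)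
    rw [Real.log_div (ne_of_gt hb) (ne_of_gt h)] at h2
    have := mul_le_mul_of_nonneg_left h2 ha
    rw [mul_sub, mul_sub, mul_div_cancel₀ _ (ne_of_gt h)] at this
    linarith

lemma relEntropy_nonneg {D E : Matrix k k ℂ} (hD : D.PosSemidef) (hDtr : D.trace = 1)
    (hE : E.PosDef) (hEtr : E.trace = 1) : 0 ≤ relEntropy D E := by
  have hDh := hD.1
  have hEh := hE.1
  set lam : k → ℝ := hDh.eigenvalues with hlam
  set mu : k → ℝ := hEh.eigenvalues with hmu
  set U := hDh.eigenvectorUnitary with hU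
  set V := hEh.eigenvectorUnitary with hV
  set W : Matrix.unitaryGroup k ℂ := V⁻¹ * U with hW
  have hWval : (W : Matrix k k ℂ) = star (V : Matrix k k ℂ) * (U : Matrix k k ℂ) := rfl
  set q : k → k → ℝ := fun j i => Complex.normSq ((W : Matrix k k ℂ) j i) with hqdef
  have hqnn : ∀ j i, 0 ≤ q j i := fun j i => Complex.normSq_nonneg _
  -- row sums
  have hrow : ∀ j, ∑ i, q j i = 1 := by
    intro j
    have h := W.2.2
    have h2 := congrArg (fun M => M j j) h
    simp only [Matrix.mul_apply, Matrix.one_apply_eq] at h2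
    have h3 : ∑ i, (W : Matrix k k ℂ) j i * star ((W : Matrix k k ℂ)) i j
        = ∑ i, ((q j i : ℝ) : ℂ) := by
      apply Finset.sum_congr rfl
      intro i _
      rw [Matrix.star_apply, hqdef]
      exact Complex.mul_conj _
    rw [h3] at h2
    have := h2
    rw [← Complex.ofReal_sum] at this
    exact_mod_cast this
  have hcol : ∀ i, ∑ j, q j i = 1 := by
    intro i
    have h := W.2.1
    have h2 := congrArg (fun M => M i i) h
    simp only [Matrix.mul_apply, Matrix.one_apply_eq] at h2
    have h3 : ∑ j, star ((W : Matrix k k ℂ)) i j * (W : Matrix k k ℂ) j i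
        = ∑ j, ((q j i : ℝ) : ℂ) := by
      apply Finset.sum_congr rfl
      intro j _
      rw [Matrix.star_apply, hqdef, mul_comm]
      exact Complex.mul_conj _
    rw [h3] at h2
    rw [← Complex.ofReal_sum] at h2
    exact_mod_cast h2
  have hlamnn : ∀ i, 0 ≤ lam i := fun i => hD.eigenvalues_nonneg i
  have hmupos : ∀ j, 0 < mu j := fun j => hE.eigenvalues_pos j
  have hlamsum : ∑ i, lam i = 1 := by
    have := sum_eigenvalues_eq_trace hDh
    rw [hDtr, ← Complex.ofReal_sum] at this
    exact_mod_cast this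
  have hmusum : ∑ j, mu j = 1 := by
    have := sum_eigenvalues_eq_trace hEh
    rw [hEtr, ← Complex.ofReal_sum] at this
    exact_mod_cast this
  -- trace of D * matLog D
  have h1 : ((D * matLog D).trace).re = ∑ i, lam i * Real.log (lam i) := by
    rw [trace_mul_matLog_self hDh, Complex.re_sum]
    apply Finset.sum_congr rfl
    intro i _
    rw [← Complex.ofReal_mul, Complex.ofReal_re]
  -- trace of D * matLog E
  have h2 : ((D * matLog E).trace).re = ∑ j, (∑ i, lam i * q j i) * Real.log (mu j) := by
    have hD2 : D = (V:Matrix k k ℂ) * ((W:Matrix k k ℂ) * Matrix.diagonal (fun i => (lam i:ℂ))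
        * star (W:Matrix k k ℂ)) * star (V:Matrix k k ℂ) := by
      rw [hWval]
      simp only [Matrix.star_mul, star_star, Matrix.mul_assoc]
      rw [V.2.2, Matrix.mul_one, ← Matrix.mul_assoc, V.2.2, Matrix.one_mul]
      exact (spectral_theorem'' hDh).trans (by simp only [Matrix.mul_assoc]; rfl)
    have hM := congrArg (fun M => (M * matLog E).trace) hD2
    rw [hM, matLog_of_isHermitian hEh, conj_mul_conj, trace_conj]
    have hX : ∀ j, (((W:Matrix k k ℂ) * Matrix.diagonal (fun i => (lam i:ℂ))
        * star (W:Matrix k k ℂ)) * Matrix.diagonal (fun j => (Real.log (mu j) : ℂ))) j j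
        = ((((∑ i, lam i * q j i) : ℝ) : ℂ)) * ((Real.log (mu j) : ℝ) : ℂ) := by
      intro j
      rw [Matrix.mul_diagonal]
      congr 1
      rw [Matrix.mul_apply, Complex.ofReal_sum]
      apply Finset.sum_congr rfl
      intro i _
      rw [Matrix.mul_diagonal, Matrix.star_apply, hqdef]
      rw [mul_comm ((W:Matrix k k ℂ) j i) ((lam i : ℂ)), mul_assoc]
      rw [show star ((W:Matrix k k ℂ) j i) = (starRingEnd ℂ) ((W:Matrix k k ℂ) j i) from rfl]
      rw [Complex.mul_conj]
      push_cast
      ring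
    rw [Matrix.trace]
    rw [Complex.re_sum]
    apply Finset.sum_congr rfl
    intro j _
    rw [Matrix.diag_apply, hX j, ← Complex.ofReal_mul, Complex.ofReal_re]
  have hrel : relEntropy D E = (∑ i, lam i * Real.log (lam i))
      - ∑ j, (∑ i, lam i * q j i) * Real.log (mu j) := by
    rw [relEntropy, Matrix.mul_sub, Matrix.trace_sub, Complex.sub_re, h1, h2]
  rw [hrel, sub_nonneg]
  have e1 : ∑ j, ∑ i, q j i * (lam i * Real.log (lam i) - lam i)
      = ∑ i, (lam i * Real.log (lam i) - lam i) := by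
    rw [Finset.sum_comm]
    apply Finset.sum_congr rfl; intro i _
    rw [← Finset.sum_mul, hcol, one_mul]
  have e2 : ∑ j, ∑ i, q j i * mu j = ∑ j, mu j := by
    apply Finset.sum_congr rfl; intro j _
    rw [← Finset.sum_mul, hrow, one_mul]
  calc ∑ j, (∑ i, lam i * q j i) * Real.log (mu j)
      = ∑ j, ∑ i, q j i * (lam i * Real.log (mu j)) := by
        apply Finset.sum_congr rfl; intro j _
        rw [Finset.sum_mul]; apply Finset.sum_congr rfl; intro i _; ring
    _ ≤ ∑ j, ∑ i, q j i * (lam i * Real.log (lam i) + mu j - lam i) := by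
        apply Finset.sum_le_sum; intro j _
        apply Finset.sum_le_sum; intro i _
        exact mul_le_mul_of_nonneg_left (log_ineq (hlamnn i) (hmupos j)) (hqnn j i)
    _ = ∑ j, ∑ i, (q j i * (lam i * Real.log (lam i) - lam i) + q j i * mu j) := by
        apply Finset.sum_congr rfl; intro j _; apply Finset.sum_congr rfl; intro i _; ring
    _ = (∑ i, (lam i * Real.log (lam i) - lam i)) + ∑ j, mu j := by
        rw [← e1, ← e2, ← Finset.sum_add_distrib]
        apply Finset.sum_congr rfl; intro j _
        rw [Finset.sum_add_distrib]
    _ = ∑ i, lam i * Real.log (lam i) := by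
        rw [Finset.sum_sub_distrib, hlamsum, hmusum]; ring


lemma kron_conjTranspose (A : Matrix k₁ k₁ ℂ) (B : Matrix k₂ k₂ ℂ) :
    (A ⊗ₖ B)ᴴ = Aᴴ ⊗ₖ Bᴴ := by
  ext ⟨i, j⟩ ⟨i', j'⟩
  simp [Matrix.conjTranspose_apply, star_mul', mul_comm]

def kronUnitary (U : Matrix.unitaryGroup k₁ ℂ) (V : Matrix.unitaryGroup k₂ ℂ) :
    Matrix.unitaryGroup (k₁ × k₂) ℂ :=
  ⟨(U : Matrix k₁ k₁ ℂ) ⊗ₖ (V : Matrix k₂ k₂ ℂ), by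
    rw [Matrix.mem_unitaryGroup_iff, Matrix.star_eq_conjTranspose, kron_conjTranspose,
      ← Matrix.mul_kronecker_mul, ← Matrix.star_eq_conjTranspose, ← Matrix.star_eq_conjTranspose,
      U.2.2, V.2.2, Matrix.one_kronecker_one]⟩

lemma kronUnitary_coe (U : Matrix.unitaryGroup k₁ ℂ) (V : Matrix.unitaryGroup k₂ ℂ) :
    ((kronUnitary U V : Matrix.unitaryGroup (k₁ × k₂) ℂ) : Matrix (k₁ × k₂) (k₁ × k₂) ℂ)
      = (U : Matrix k₁ k₁ ℂ) ⊗ₖ (V : Matrix k₂ k₂ ℂ) := rfl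

lemma matLog_conj_diag (U : Matrix.unitaryGroup k ℂ) (d : k → ℝ) :
    matLog ((U:Matrix k k ℂ) * Matrix.diagonal (fun i => (d i:ℂ)) * star (U:Matrix k k ℂ))
      = (U:Matrix k k ℂ) * Matrix.diagonal (fun i => (Real.log (d i):ℂ)) * star (U:Matrix k k ℂ) :=
  hermCalc_conj_diag Real.log U d

lemma matLog_kron {A : Matrix k₁ k₁ ℂ} {B : Matrix k₂ k₂ ℂ} (hA : A.PosDef) (hB : B.PosDef) :
    matLog (A ⊗ₖ B) = (matLog A) ⊗ₖ (1 : Matrix k₂ k₂ ℂ)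
      + (1 : Matrix k₁ k₁ ℂ) ⊗ₖ (matLog B) := by
  have hAh := hA.1
  have hBh := hB.1
  set UA := hAh.eigenvectorUnitary with hUA
  set UB := hBh.eigenvectorUnitary with hUB
  set lam := hAh.eigenvalues with hlam
  set mu := hBh.eigenvalues with hmu
  have hUA1 : (UA : Matrix k₁ k₁ ℂ) * ((UA : Matrix k₁ k₁ ℂ))ᴴ = 1 := by
    rw [← Matrix.star_eq_conjTranspose]; exact UA.2.2
  have hUB1 : (UB : Matrix k₂ k₂ ℂ) * ((UB : Matrix k₂ k₂ ℂ))ᴴ = 1 := by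
    rw [← Matrix.star_eq_conjTranspose]; exact UB.2.2
  have hdiag : Matrix.diagonal (fun p : k₁ × k₂ => ((lam p.1 * mu p.2 : ℝ) : ℂ))
      = (Matrix.diagonal fun i => ((lam i : ℝ) : ℂ)) ⊗ₖ (Matrix.diagonal fun j => ((mu j : ℝ) : ℂ)) := by
    rw [Matrix.diagonal_kronecker_diagonal]
    congr 1; funext p; push_cast; ring
  have hkron : A ⊗ₖ B = ((kronUnitary UA UB : Matrix.unitaryGroup (k₁ × k₂) ℂ)
        : Matrix (k₁ × k₂) (k₁ × k₂) ℂ)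
      * Matrix.diagonal (fun p : k₁ × k₂ => ((lam p.1 * mu p.2 : ℝ) : ℂ))
      * star ((kronUnitary UA UB : Matrix.unitaryGroup (k₁ × k₂) ℂ)
        : Matrix (k₁ × k₂) (k₁ × k₂) ℂ) := by
    rw [kronUnitary_coe, hdiag]
    simp only [Matrix.star_eq_conjTranspose, kron_conjTranspose, ← Matrix.mul_kronecker_mul]
    conv_lhs => rw [spectral_theorem'' hAh, spectral_theorem'' hBh]
    simp only [Matrix.star_eq_conjTranspose]
    rfl
  rw [hkron, matLog_conj_diag]
  have hlog : (fun p : k₁ × k₂ => ((Real.log (lam p.1 * mu p.2) : ℝ) : ℂ))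
      = fun p : k₁ × k₂ => ((Real.log (lam p.1) : ℝ) : ℂ) * (1 : ℂ)
        + (1 : ℂ) * ((Real.log (mu p.2) : ℝ) : ℂ) := by
    funext p
    rw [Real.log_mul (ne_of_gt (hA.eigenvalues_pos p.1)) (ne_of_gt (hB.eigenvalues_pos p.2))]
    push_cast; ring
  rw [hlog]
  have hdiagsplit : Matrix.diagonal (fun p : k₁ × k₂ =>
        ((Real.log (lam p.1) : ℝ) : ℂ) * (1 : ℂ) + (1 : ℂ) * ((Real.log (mu p.2) : ℝ) : ℂ))
      = Matrix.diagonal (fun i => (Real.log (lam i) : ℂ)) ⊗ₖ (1 : Matrix k₂ k₂ ℂ)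
        + (1 : Matrix k₁ k₁ ℂ) ⊗ₖ Matrix.diagonal (fun j => (Real.log (mu j) : ℂ)) := by
    rw [← Matrix.diagonal_one (n := k₂), ← Matrix.diagonal_one (n := k₁),
      Matrix.diagonal_kronecker_diagonal, Matrix.diagonal_kronecker_diagonal,
      Matrix.diagonal_add]
  rw [hdiagsplit, Matrix.mul_add, Matrix.add_mul, kronUnitary_coe]
  simp only [Matrix.star_eq_conjTranspose, kron_conjTranspose, ← Matrix.mul_kronecker_mul]
  rw [matLog_of_isHermitian hAh, matLog_of_isHermitian hBh]
  simp only [Matrix.star_eq_conjTranspose]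
  rw [Matrix.mul_one, Matrix.mul_one, hUA1, hUB1]

lemma trace_mul_kron_one (D : Matrix (k₁ × k₂) (k₁ × k₂) ℂ) (X : Matrix k₁ k₁ ℂ) :
    (D * (X ⊗ₖ (1 : Matrix k₂ k₂ ℂ))).trace = (ptraceR D * X).trace := by
  simp only [Matrix.trace, Matrix.diag_apply, Matrix.mul_apply, ptraceR, Matrix.of_apply,
    Fintype.sum_prod_type, kroneckerMap_apply, Matrix.one_apply, Finset.sum_mul,
    mul_ite, mul_one, mul_zero, ite_mul, zero_mul, Finset.sum_ite_eq', Finset.mem_univ, if_true]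
  apply Finset.sum_congr rfl; intro x _
  rw [Finset.sum_comm]

lemma trace_mul_one_kron (D : Matrix (k₁ × k₂) (k₁ × k₂) ℂ) (Y : Matrix k₂ k₂ ℂ) :
    (D * ((1 : Matrix k₁ k₁ ℂ) ⊗ₖ Y)).trace = (ptraceL D * Y).trace := by
  simp only [Matrix.trace, Matrix.diag_apply, Matrix.mul_apply, ptraceL, Matrix.of_apply,
    Fintype.sum_prod_type, kroneckerMap_apply, Matrix.one_apply, Finset.sum_mul,
    mul_ite, mul_one, mul_zero, ite_mul, zero_mul, Finset.sum_ite_irrel, Finset.sum_const_zero,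
    Finset.sum_ite_eq', Finset.sum_ite_eq, Finset.mem_univ, if_true, one_mul]
  rw [Finset.sum_comm]
  apply Finset.sum_congr rfl; intro x _
  rw [Finset.sum_comm]


lemma sum_rotate {α β γ : Type*} [Fintype α] [Fintype β] [Fintype γ] (f : α → β → γ → ℂ) :
    ∑ a, ∑ b, ∑ c, f a b c = ∑ c, ∑ a, ∑ b, f a b c := by
  calc ∑ a, ∑ b, ∑ c, f a b c
      = ∑ a, ∑ c, ∑ b, f a b c := Finset.sum_congr rfl fun a _ => Finset.sum_comm
    _ = ∑ c, ∑ a, ∑ b, f a b c := Finset.sum_comm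

lemma ptraceR_posSemidef {D : Matrix (k₁ × k₂) (k₁ × k₂) ℂ} (hD : D.PosSemidef) :
    (ptraceR D).PosSemidef := by
  rw [Matrix.posSemidef_iff_dotProduct_mulVec]
  constructor
  · unfold Matrix.IsHermitian
    ext i j
    simp only [Matrix.conjTranspose_apply, ptraceR, Matrix.of_apply, star_sum]
    apply Finset.sum_congr rfl
    intro s _
    exact congrFun (congrFun hD.1 (i, s)) (j, s)
  · intro x
    have key : dotProduct (star x) (ptraceR D *ᵥ x)
        = ∑ s : k₂, dotProduct (star (fun p : k₁ × k₂ => if p.2 = s then x p.1 else 0))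
            (D *ᵥ (fun p : k₁ × k₂ => if p.2 = s then x p.1 else 0)) := by
      simp only [dotProduct, Matrix.mulVec, dotProduct, ptraceR, Matrix.of_apply, Pi.star_apply,
        Fintype.sum_prod_type, apply_ite (star : ℂ → ℂ), star_zero, mul_ite, ite_mul, zero_mul, mul_zero,
        Finset.sum_ite_irrel, Finset.sum_const_zero, Finset.sum_ite_eq', Finset.sum_ite_eq,
        Finset.mem_univ, if_true, Finset.mul_sum, Finset.sum_mul]
      exact sum_rotate (fun (a : k₁) (b : k₁) (c : k₂) => star (x a) * (D (a, c) (b, c) * x b))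
    rw [key]
    exact Finset.sum_nonneg fun s _ => hD.dotProduct_mulVec_nonneg _

lemma ptraceL_posSemidef {D : Matrix (k₁ × k₂) (k₁ × k₂) ℂ} (hD : D.PosSemidef) :
    (ptraceL D).PosSemidef := by
  rw [Matrix.posSemidef_iff_dotProduct_mulVec]
  constructor
  · unfold Matrix.IsHermitian
    ext i j
    simp only [Matrix.conjTranspose_apply, ptraceL, Matrix.of_apply, star_sum]
    apply Finset.sum_congr rfl
    intro s _
    exact congrFun (congrFun hD.1 (s, i)) (s, j)
  · intro x
    have key : dotProduct (star x) (ptraceL D *ᵥ x)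
        = ∑ s : k₁, dotProduct (star (fun p : k₁ × k₂ => if p.1 = s then x p.2 else 0))
            (D *ᵥ (fun p : k₁ × k₂ => if p.1 = s then x p.2 else 0)) := by
      simp only [dotProduct, Matrix.mulVec, dotProduct, ptraceL, Matrix.of_apply, Pi.star_apply,
        Fintype.sum_prod_type, apply_ite (star : ℂ → ℂ), star_zero, mul_ite, ite_mul, zero_mul, mul_zero,
        Finset.sum_ite_irrel, Finset.sum_const_zero, Finset.sum_ite_eq', Finset.sum_ite_eq,
        Finset.mem_univ, if_true, Finset.mul_sum, Finset.sum_mul]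
      exact sum_rotate (fun (a : k₂) (b : k₂) (c : k₁) => star (x a) * (D (c, a) (c, b) * x b))
    rw [key]
    exact Finset.sum_nonneg fun s _ => hD.dotProduct_mulVec_nonneg _

lemma ptraceR_trace (D : Matrix (k₁ × k₂) (k₁ × k₂) ℂ) : (ptraceR D).trace = D.trace := by
  simp [Matrix.trace, ptraceR, Fintype.sum_prod_type]

lemma ptraceL_trace (D : Matrix (k₁ × k₂) (k₁ × k₂) ℂ) : (ptraceL D).trace = D.trace := by
  rw [Matrix.trace, Matrix.trace, Fintype.sum_prod_type]
  rw [Finset.sum_comm]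
  rfl


end Aux

/-- the mutual entropy is bounded by the relative entropy with respect
to any product reference state. -/
theorem mutualEntropy_le_relEntropy_product {m n : ℕ}
    (ϖ : Matrix (Fin m × Fin n) (Fin m × Fin n) ℂ)
    (hϖ : ϖ.PosDef) (hϖtr : ϖ.trace = 1)
    (σL : Matrix (Fin m) (Fin m) ℂ) (hσL : σL.PosDef) (hσLtr : σL.trace = 1)
    (σR : Matrix (Fin n) (Fin n) ℂ) (hσR : σR.PosDef) (hσRtr : σR.trace = 1) :
    mutualEntropy ϖ ≤ relEntropy ϖ (σL ⊗ₖ σR) := by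
  have hϖps := hϖ.posSemidef
  have hA : (ptraceR ϖ).PosSemidef := ptraceR_posSemidef hϖps
  have hB : (ptraceL ϖ).PosSemidef := ptraceL_posSemidef hϖps
  have hAtr : (ptraceR ϖ).trace = 1 := by rw [ptraceR_trace, hϖtr]
  have hBtr : (ptraceL ϖ).trace = 1 := by rw [ptraceL_trace, hϖtr]
  have kl1 := relEntropy_nonneg hA hAtr hσL hσLtr
  have kl2 := relEntropy_nonneg hB hBtr hσR hσRtr
  have key : relEntropy ϖ (σL ⊗ₖ σR)
      = relEntropy (ptraceR ϖ) σL + relEntropy (ptraceL ϖ) σR + mutualEntropy ϖ := by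
    rw [mutualEntropy, vnEntropy_eq hA.1, vnEntropy_eq hB.1, vnEntropy_eq hϖps.1]
    rw [relEntropy, relEntropy, relEntropy]
    rw [matLog_kron hσL hσR]
    rw [Matrix.mul_sub, Matrix.mul_sub, Matrix.mul_sub, Matrix.mul_add,
      Matrix.trace_sub, Matrix.trace_sub, Matrix.trace_sub, Matrix.trace_add,
      trace_mul_kron_one, trace_mul_one_kron]
    simp only [Complex.sub_re, Complex.add_re]
    ring
  linarith [key, kl1, kl2]

end TAL
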